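/- Let I be a proper ideal of P = K[x_1,...,x_n], let Z = (z_1,...,z_s) be a tuple of distinct indeterminates, and let F = (f_1,...,f_s) be a tuple of polynomials in I with f_i = z_i - h_i where h_i ∈ K[X\Z] (no indeterminate of Z divides any term of h_i). Then the K-algebra homomorphism φ: P → K[X\Z] defined by z_i ↦ h_i and x_j ↦ x_j for x_j ∉ Z induces a K-algebra isomorphism P/I ≅ K[X\Z]/(I ∩ K[X\Z]). -/
import Mathlib


open MvPolynomial

/-- A coherently `Z`-separating tuple `(X (z i) - h i)` in a proper ideal `I`
yields, via the substitution `z_i ↦ h_i`, a `K`-algebra isomorphism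
`P/I ≅ K[X∖Z]/(I ∩ K[X∖Z])`. -/
theorem Z_separating_reembedding {K : Type*} [Field K] {n s : ℕ}
    (z : Fin s → Fin n) (hz : Function.Injective z)
    (I : Ideal (MvPolynomial (Fin n) K)) (hI : I ≠ ⊤)
    (h : Fin s → MvPolynomial (Fin n) K)
    (hh : ∀ i, h i ∈ MvPolynomial.supported K ((Set.range z)ᶜ))
    (hf : ∀ i, (X (z i) : MvPolynomial (Fin n) K) - h i ∈ I)
    (v : Fin n → MvPolynomial (Fin n) K)
    (hv1 : ∀ i, v (z i) = h i) (hv2 : ∀ j, j ∉ Set.range z → v j = X j) :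
    ∃ hφS : ∀ p : MvPolynomial (Fin n) K,
        aeval v p ∈ MvPolynomial.supported K ((Set.range z)ᶜ),
      ∃ Φ : (MvPolynomial (Fin n) K ⧸ I) ≃ₐ[K]
          ((MvPolynomial.supported K ((Set.range z)ᶜ)) ⧸
            Ideal.comap (MvPolynomial.supported K ((Set.range z)ᶜ)).val I),
        ∀ p : MvPolynomial (Fin n) K,
          Φ (Ideal.Quotient.mk I p) =
            Ideal.Quotient.mk
              (Ideal.comap (MvPolynomial.supported K ((Set.range z)ᶜ)).val I)
              ⟨aeval v p, hφS p⟩ := by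
  set S : Set (Fin n) := (Set.range z)ᶜ with hS
  have hvmem : ∀ j, v j ∈ MvPolynomial.supported K S := by
    intro j
    by_cases hj : j ∈ Set.range z
    · obtain ⟨i, rfl⟩ := hj; rw [hv1]; exact hh i
    · rw [hv2 j hj]; exact (X_mem_supported).mpr (by simpa [hS] using hj)
  have hφS : ∀ p : MvPolynomial (Fin n) K,
      aeval v p ∈ MvPolynomial.supported K S := by
    intro p
    have h1 : aeval v p ∈ Algebra.adjoin K (Set.range v) := by
      rw [Algebra.adjoin_range_eq_range_aeval]; exact ⟨p, rfl⟩
    exact Algebra.adjoin_le (Set.range_subset_iff.mpr hvmem) h1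
  have hfix : ∀ q ∈ MvPolynomial.supported K S, aeval v q = q := by
    intro q hq
    rw [MvPolynomial.supported] at hq
    induction hq using Algebra.adjoin_induction with
    | mem x hx =>
      obtain ⟨j, hj, rfl⟩ := hx
      rw [aeval_X, hv2 j (by simpa [hS] using hj)]
    | algebraMap r => simp
    | add a b _ _ ha hb => rw [map_add, ha, hb]
    | mul a b _ _ ha hb => rw [map_mul, ha, hb]
  have hcong : ∀ p, Ideal.Quotient.mk I (aeval v p) = Ideal.Quotient.mk I p := by
    have key : (Ideal.Quotient.mkₐ K I).comp (aeval v) = Ideal.Quotient.mkₐ K I := by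
      apply MvPolynomial.algHom_ext
      intro j
      simp only [AlgHom.comp_apply, aeval_X, Ideal.Quotient.mkₐ_eq_mk]
      by_cases hj : j ∈ Set.range z
      · obtain ⟨i, rfl⟩ := hj
        rw [hv1]
        exact Ideal.Quotient.eq.mpr (by simpa [neg_sub] using neg_mem (hf i))
      · rw [hv2 j hj]
    intro p
    have := congrArg (fun f => f p) key
    simpa using this
  set J := Ideal.comap (MvPolynomial.supported K S).val I with hJ
  let ψ : MvPolynomial (Fin n) K →ₐ[K] ((MvPolynomial.supported K S) ⧸ J) :=
    (Ideal.Quotient.mkₐ K J).comp (AlgHom.codRestrict (aeval v) _ hφS)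
  have hψ : ∀ p, ψ p = Ideal.Quotient.mk J ⟨aeval v p, hφS p⟩ := fun p => rfl
  have hker : ∀ p, ψ p = 0 ↔ p ∈ I := by
    intro p
    rw [hψ, Ideal.Quotient.eq_zero_iff_mem, hJ, Ideal.mem_comap]
    show aeval v p ∈ I ↔ p ∈ I
    rw [← Ideal.Quotient.eq_zero_iff_mem, ← Ideal.Quotient.eq_zero_iff_mem (I := I) (a := p),
      hcong p]
  have hsurj : Function.Surjective ψ := by
    intro y
    obtain ⟨⟨q, hq⟩, rfl⟩ := Ideal.Quotient.mk_surjective y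
    exact ⟨q, by rw [hψ]; exact congrArg _ (Subtype.ext (hfix q hq))⟩
  refine ⟨hφS, ?_⟩
  have hle : ∀ p ∈ I, ψ p = 0 := fun p hp => (hker p).mpr hp
  let Φ0 : (MvPolynomial (Fin n) K ⧸ I) →ₐ[K] ((MvPolynomial.supported K S) ⧸ J) :=
    Ideal.Quotient.liftₐ I ψ hle
  have hΦ0 : ∀ p, Φ0 (Ideal.Quotient.mk I p) = ψ p := fun p =>
    Ideal.Quotient.liftₐ_apply I ψ hle _
  have hbij : Function.Bijective Φ0 := by
    constructor
    · rw [injective_iff_map_eq_zero]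
      intro a ha
      obtain ⟨p, rfl⟩ := Ideal.Quotient.mk_surjective a
      rw [hΦ0] at ha
      exact Ideal.Quotient.eq_zero_iff_mem.mpr ((hker p).mp ha)
    · intro y
      obtain ⟨p, hp⟩ := hsurj y
      exact ⟨Ideal.Quotient.mk I p, by rw [hΦ0]; exact hp⟩
  exact ⟨AlgEquiv.ofBijective Φ0 hbij, fun p => by
    show Φ0 (Ideal.Quotient.mk I p) = _
    rw [hΦ0, hψ]⟩
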